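/- Assume the continuum hypothesis (the cardinality of the continuum equals ℵ₁). Then there exists a function f : ℝ × ℝ → ℝ such that every set A ⊆ ℝ that is free for f is at most countable. -/

import Mathlib

open Set Function Cardinal Ordinal

lemma exists_injective_choice {ι α : Type*} [Countable ι] (S : ι → Set α)
    (hS : ∀ i, (S i).Infinite) : ∃ g : ι → α, Function.Injective g ∧ ∀ i, g i ∈ S i := by
  classical
  rcases isEmpty_or_nonempty ι with h | hne
  · exact ⟨fun i => isEmptyElim i, fun a => isEmptyElim a, fun i => isEmptyElim i⟩
  obtain ⟨e, he⟩ := Countable.exists_injective_nat ι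
  have hd : α := ((hS (Classical.arbitrary ι)).nonempty).choose
  let pick : (n : ℕ) → (Fin n → α) → α := fun n prev =>
    if h : ∃ i, e i = n then
      (((hS h.choose).diff (Set.finite_range prev)).nonempty).choose
    else hd
  let v : (n : ℕ) → Fin n → α := fun n => Nat.rec Fin.elim0 (fun n ih => Fin.snoc ih (pick n ih)) n
  have hv : ∀ n, v (n + 1) = Fin.snoc (v n) (pick n (v n)) := fun n => rfl
  let u : ℕ → α := fun n => v (n + 1) (Fin.last n)
  have hu : ∀ n, u n = pick n (v n) := by
    intro n
    show (Fin.snoc (v n) (pick n (v n)) : Fin (n + 1) → α) (Fin.last n) = _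
    rw [Fin.snoc_last]
  have hstab : ∀ n (k : Fin n), v n k = u k.val := by
    intro n
    induction n with
    | zero => exact fun k => k.elim0
    | succ n ih =>
      intro k
      rcases lt_or_eq_of_le (Nat.lt_succ_iff.mp k.isLt) with h | h
      · have hk : k = Fin.castSucc ⟨k.val, h⟩ := by ext; rfl
        rw [hv, hk, Fin.snoc_castSucc, ih]
        rfl
      · have hk : k = Fin.last n := Fin.ext h
        rw [hv, hk, Fin.snoc_last]
        exact (hu n).symm
  have hpick : ∀ n prev, pick n prev = if h : ∃ i, e i = n then
      (((hS h.choose).diff (Set.finite_range prev)).nonempty).choose else hd := fun n prev => rfl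
  have hkey : ∀ i, u (e i) ∈ S i ∧ ∀ m, m < e i → u (e i) ≠ u m := by
    intro i
    have hex : ∃ j, e j = e i := ⟨i, rfl⟩
    have hji : hex.choose = i := he hex.choose_spec
    have hp : u (e i) =
        (((hS hex.choose).diff (Set.finite_range (v (e i)))).nonempty).choose := by
      rw [hu, hpick, dif_pos hex]
    have hmem := (((hS hex.choose).diff (Set.finite_range (v (e i)))).nonempty).choose_spec
    rw [← hp, hji] at hmem
    refine ⟨hmem.1, fun m hm hcontra => hmem.2 ?_⟩
    exact ⟨⟨m, hm⟩, (hstab (e i) ⟨m, hm⟩).trans hcontra.symm⟩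
  refine ⟨fun i => u (e i), ?_, fun i => (hkey i).1⟩
  intro i j hij
  by_contra hne'
  rcases Nat.lt_trichotomy (e i) (e j) with h | h | h
  · exact (hkey j).2 (e i) h hij.symm
  · exact hne' (he h)
  · exact (hkey i).2 (e j) h hij

/-- Under CH there is a function `f : ℝ × ℝ → ℝ` all of whose free subsets are at most
countable. -/
theorem CH_function_with_only_countable_free_sets
    (ch : Cardinal.continuum = Cardinal.aleph 1) :
    ∃ f : ℝ × ℝ → ℝ, ∀ A : Set ℝ,
      (∀ a ∈ A, ∀ b ∈ A, f (a, b) = a ∨ f (a, b) = b ∨ f (a, b) ∉ A) →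
      A.Countable := by
  classical
  have ch0 : (Cardinal.continuum : Cardinal.{0}) = Cardinal.aleph 1 := by
    rw [← Cardinal.lift_inj.{0}, Cardinal.lift_continuum, Cardinal.lift_aleph, Ordinal.lift_one]
    exact ch
  have hR : #ℝ = ℵ₁ := by rw [Cardinal.mk_real]; exact ch0
  have hP : #((ℕ → ℝ) × ℝ) = ℵ₁ := by
    rw [Cardinal.mk_prod, Cardinal.lift_id, Cardinal.lift_id, Cardinal.mk_real,
      Cardinal.mk_arrow, Cardinal.lift_id, Cardinal.lift_id, Cardinal.mk_real, Cardinal.mk_nat,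
      Cardinal.continuum_power_aleph0, Cardinal.continuum_mul_self]
    exact ch0
  obtain ⟨r, wo_r, hr⟩ := Cardinal.ord_eq ℝ
  obtain ⟨q, wo_q, hq⟩ := Cardinal.ord_eq ((ℕ → ℝ) × ℝ)
  letI := wo_r
  letI := wo_q
  have htype : type r = type q := by rw [← hr, ← hq, hR, hP]
  -- initial segments of r are countable
  have hinit_r : ∀ x : ℝ, {y : ℝ | r y x}.Countable := by
    intro x
    rw [Cardinal.countable_iff_lt_aleph_one, ← hR]
    rw [show #{y : ℝ | r y x} = (Ordinal.typein r x).card from (Ordinal.card_typein x).symm]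
    exact Cardinal.card_typein_lt (r := r) x hr
  have hinit_q : ∀ p₀ : (ℕ → ℝ) × ℝ, {p : (ℕ → ℝ) × ℝ | q p p₀}.Countable := by
    intro p₀
    rw [Cardinal.countable_iff_lt_aleph_one, ← hP]
    rw [show #{p : (ℕ → ℝ) × ℝ | q p p₀} = (Ordinal.typein q p₀).card from
      (Ordinal.card_typein p₀).symm]
    exact Cardinal.card_typein_lt (r := q) p₀ hq
  -- the set of constraints relevant for x
  set D : ℝ → Set ((ℕ → ℝ) × ℝ) :=
    fun x => {p | Ordinal.typein q p < Ordinal.typein r x ∧ Function.Injective p.1} with hD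
  have hDcount : ∀ x : ℝ, (D x).Countable := by
    intro x
    have hlt : Ordinal.typein r x < type q := htype ▸ Ordinal.typein_lt_type r x
    obtain ⟨p₀, hp₀⟩ := Ordinal.typein_surj q hlt
    refine (hinit_q p₀).mono ?_
    intro p hp
    have : Ordinal.typein q p < Ordinal.typein q p₀ := by rw [hp₀]; exact hp.1
    exact (Ordinal.typein_lt_typein q).mp this
  -- injective choice of witnesses for each x
  have hchoice : ∀ x : ℝ, ∃ g : (D x) → ℝ,
      Function.Injective g ∧ ∀ p : (D x), g p ∈ Set.range p.val.1 := by
    intro x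
    haveI := (hDcount x).to_subtype
    exact exists_injective_choice (fun p : (D x) => Set.range p.val.1)
      (fun p => Set.infinite_range_of_injective p.property.2)
  choose G hGinj hGmem using hchoice
  set f : ℝ × ℝ → ℝ :=
    fun z => if h : ∃ p : (D z.1), G z.1 p = z.2 then h.choose.val.2 else 0 with hfdef
  have hf : ∀ (x : ℝ) (p : (D x)), f (x, G x p) = p.val.2 := by
    intro x p
    have hx : ∃ p' : (D x), G x p' = G x p := ⟨p, rfl⟩
    have hcp : hx.choose = p := hGinj x hx.choose_spec
    simp only [hfdef]
    rw [dif_pos hx, hcp]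
  refine ⟨f, ?_⟩
  intro A hfree
  by_contra hA
  have hinf : A.Infinite := fun hfin => hA hfin.countable
  let E := Set.Infinite.natEmbedding A hinf
  set s : ℕ → ℝ := fun n => (E n : ℝ) with hs
  have hs_inj : Function.Injective s := Subtype.coe_injective.comp E.injective
  have hs_mem : ∀ n, s n ∈ A := fun n => (E n).2
  -- choose a target c in A outside the range of s
  have hc : (A \ Set.range s).Nonempty := by
    by_contra h
    rw [Set.not_nonempty_iff_eq_empty, Set.diff_eq_empty] at h
    exact hA ((Set.countable_range s).mono h)
  obtain ⟨c, hcA, hcs⟩ := hc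
  -- the countable set of "bad" points a
  have hBad : {x : ℝ | Ordinal.typein r x ≤ Ordinal.typein q (s, c)}.Countable := by
    have hlt : Ordinal.typein q (s, c) < type r := htype ▸ Ordinal.typein_lt_type q (s, c)
    obtain ⟨x₀, hx₀⟩ := Ordinal.typein_surj r hlt
    have hsub : {x : ℝ | Ordinal.typein r x ≤ Ordinal.typein q (s, c)} ⊆
        {y : ℝ | r y x₀} ∪ {x₀} := by
      intro x hx
      simp only [Set.mem_setOf_eq] at hx
      rcases lt_or_eq_of_le (le_of_le_of_eq hx hx₀.symm) with h | h
      · exact Or.inl ((Ordinal.typein_lt_typein r).mp h)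
      · exact Or.inr (Ordinal.typein_injective r h)
    exact ((hinit_r x₀).union (Set.countable_singleton x₀)).mono hsub
  -- pick a good point a ∈ A
  have ha : (A \ ({x : ℝ | Ordinal.typein r x ≤ Ordinal.typein q (s, c)} ∪ Set.range s
      ∪ {c})).Nonempty := by
    by_contra h
    rw [Set.not_nonempty_iff_eq_empty, Set.diff_eq_empty] at h
    exact hA (((hBad.union (Set.countable_range s)).union (Set.countable_singleton c)).mono h)
  obtain ⟨a, haA, haBad⟩ := ha
  have haBad' : ¬ (Ordinal.typein r a ≤ Ordinal.typein q (s, c)) :=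
    fun h => haBad (Or.inl (Or.inl h))
  have haS : a ∉ Set.range s := fun h => haBad (Or.inl (Or.inr h))
  have haC : a ≠ c := fun h => haBad (Or.inr (by simp [h]))
  have hpa : (s, c) ∈ D a := ⟨not_le.mp haBad', hs_inj⟩
  set b : ℝ := G a ⟨(s, c), hpa⟩ with hb
  have hbS : b ∈ Set.range s := hGmem a ⟨(s, c), hpa⟩
  have hbA : b ∈ A := by obtain ⟨n, hn⟩ := hbS; exact hn ▸ hs_mem n
  have hfab : f (a, b) = c := hf a ⟨(s, c), hpa⟩
  rcases hfree a haA b hbA with h | h | h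
  · exact haC (hfab ▸ h).symm
  · rw [hfab] at h
    exact hcs (h ▸ hbS)
  · exact h (hfab ▸ hcA)
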